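/- For every prime p ≥ 3, there exists a resolvable Golomb ruler of order p−1 whose length is at most p² − 2p. -/

import Mathlib

/-- A Golomb ruler: a finite set of integers all of whose differences of
ordered pairs of distinct elements are pairwise distinct. -/
def IsGolombRuler (X : Finset ℤ) : Prop :=
  ∀ a ∈ X, ∀ b ∈ X, ∀ c ∈ X, ∀ d ∈ X,
    a - b = c - d → (a = b ∧ c = d) ∨ (a = c ∧ b = d)

/-- `X` has length `L`: the difference between its maximum and minimum elements is `L`. -/
def HasLength (X : Finset ℤ) (L : ℕ) : Prop :=
  ∃ m ∈ X, ∃ M ∈ X, (∀ x ∈ X, m ≤ x ∧ x ≤ M) ∧ M - m = (L : ℤ)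

/-- The elements of `X` cover all `k` residue classes modulo `k`. -/
def CoversResidues (k : ℕ) (X : Finset ℤ) : Prop :=
  ∀ r : ZMod k, ∃ x ∈ X, (x : ZMod k) = r

/-- A resolvable Golomb ruler RGR(k,L). -/
def IsRGR (k L : ℕ) (X : Finset ℤ) : Prop :=
  X.card = k ∧ IsGolombRuler X ∧ HasLength X L ∧ CoversResidues k X

/-- For every prime p ≥ 3, there exists a resolvable Golomb ruler of order p−1
whose length is at most p² − 2p. -/
theorem rgr_from_ruzsa (p : ℕ) (hp : p.Prime) (hp3 : 3 ≤ p) :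
    ∃ L ≤ p ^ 2 - 2 * p, ∃ X : Finset ℤ, IsRGR (p - 1) L X := by
  haveI : Fact p.Prime := ⟨hp⟩
  set q := p - 1 with hqdef
  haveI hqz : NeZero q := ⟨by omega⟩
  haveI : NeZero (p * q) := ⟨by
    have : 0 < q := by omega
    positivity⟩
  have hpq : p ≤ p * q := Nat.le_mul_of_pos_right p (by omega)
  have hsq : p * q + p = p ^ 2 := by
    have h1 : q + 1 = p := by omega
    calc p * q + p = p * (q + 1) := by ring
      _ = p ^ 2 := by rw [h1]; ring
  have hcop : Nat.Coprime p q := by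
    have h1 : p - q = 1 := by omega
    have h2 := (Nat.coprime_sub_self_left (show q ≤ p by omega)).mp
    rw [h1] at h2
    exact h2 (Nat.coprime_one_left q)
  obtain ⟨g, hg⟩ := IsCyclic.exists_generator (α := (ZMod p)ˣ)
  have hord : orderOf g = q := by
    rw [orderOf_eq_card_of_forall_mem_zpowers hg, Nat.card_eq_fintype_card, ZMod.card_units]
  set Gu : ZMod q → (ZMod p)ˣ := fun i => g ^ i.val with hGu
  have Guinj : Function.Injective Gu := by
    intro i j h
    have h2 := pow_eq_pow_iff_modEq.mp h
    rw [hord] at h2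
    have h3 : i.val % q = j.val % q := h2
    rw [Nat.mod_eq_of_lt (ZMod.val_lt i), Nat.mod_eq_of_lt (ZMod.val_lt j)] at h3
    exact ZMod.val_injective q h3
  have Gumul : ∀ a b c d : ZMod q, a + d = b + c → Gu a * Gu d = Gu b * Gu c := by
    intro a b c d h
    have hv : (a + d).val = (b + c).val := by rw [h]
    rw [ZMod.val_add, ZMod.val_add] at hv
    have hm : a.val + d.val ≡ b.val + c.val [MOD q] := hv
    show g ^ a.val * g ^ d.val = g ^ b.val * g ^ c.val
    rw [← pow_add, ← pow_add]
    exact pow_eq_pow_iff_modEq.mpr (by rwa [hord])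
  set e := ZMod.chineseRemainder hcop with he
  set u : ZMod q → ZMod (p * q) := fun i => e.symm ((Gu i : ZMod p), i) with hu
  have heu : ∀ i, e (u i) = ((Gu i : ZMod p), i) := fun i => e.apply_symm_apply _
  have hesnd : ∀ x : ZMod (p * q), (e x).2 = (x.val : ZMod q) := by
    have hdvd : q ∣ p * q := dvd_mul_left q p
    have hhom : (RingHom.snd (ZMod p) (ZMod q)).comp (e : ZMod (p * q) →+* _)
        = ZMod.castHom hdvd (ZMod q) := RingHom.ext_zmod _ _
    intro x
    have h1 := RingHom.congr_fun hhom x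
    rw [ZMod.natCast_val]
    simpa [ZMod.castHom_apply] using h1
  -- counting: find a good shift t
  have hVcard : ∀ i : ZMod q,
      (Finset.univ.filter fun s : ZMod (p * q) => p * q - p < (u i + s).val).card ≤ p - 1 := by
    intro i
    have h1 : (Finset.univ.filter fun s : ZMod (p * q) => p * q - p < (u i + s).val).card
        = (Finset.univ.filter fun v : ZMod (p * q) => p * q - p < v.val).card := by
      apply Finset.card_bij' (fun s _ => u i + s) (fun v _ => v - u i)
      · intro s hs
        simp only [Finset.mem_filter, Finset.mem_univ, true_and] at hs ⊢
        exact hs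
      · intro v hv
        simp only [Finset.mem_filter, Finset.mem_univ, true_and] at hv ⊢
        rw [add_sub_cancel]
        exact hv
      · intro s _; ring
      · intro v _; ring
    rw [h1]
    have h2 : (Finset.univ.filter fun v : ZMod (p * q) => p * q - p < v.val).card
        ≤ (Finset.Ioo (p * q - p) (p * q)).card := by
      apply Finset.card_le_card_of_injOn ZMod.val
      · intro v hv
        simp only [Finset.mem_coe, Finset.mem_filter, Finset.mem_univ, true_and] at hv
        simp only [Finset.mem_coe, Finset.mem_Ioo]
        exact ⟨hv, ZMod.val_lt v⟩
      · exact (ZMod.val_injective _).injOn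
    rw [Nat.card_Ioo] at h2
    have h3 : p * q - (p * q - p) - 1 ≤ p - 1 := by
      generalize p * q = A at hpq ⊢
      omega
    exact h2.trans h3
  have hBadlt :
      (Finset.univ.biUnion fun i : ZMod q =>
        Finset.univ.filter fun s : ZMod (p * q) => p * q - p < (u i + s).val).card
        < Fintype.card (ZMod (p * q)) := by
    calc (Finset.univ.biUnion fun i : ZMod q =>
          Finset.univ.filter fun s : ZMod (p * q) => p * q - p < (u i + s).val).card
        ≤ ∑ i : ZMod q, (Finset.univ.filter
            fun s : ZMod (p * q) => p * q - p < (u i + s).val).card :=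
          Finset.card_biUnion_le
      _ ≤ ∑ _i : ZMod q, (p - 1) := Finset.sum_le_sum fun i _ => hVcard i
      _ = q * (p - 1) := by rw [Finset.sum_const, Finset.card_univ, ZMod.card, smul_eq_mul]
      _ < p * q := by
          rw [mul_comm]
          exact Nat.mul_lt_mul_of_lt_of_le (by omega) le_rfl (by omega)
      _ = Fintype.card (ZMod (p * q)) := (ZMod.card _).symm
  obtain ⟨t, ht⟩ : ∃ t : ZMod (p * q), ∀ i : ZMod q, (u i + t).val ≤ p * q - p := by
    by_contra hcon
    push_neg at hcon
    have hsub : (Finset.univ : Finset (ZMod (p * q))) ⊆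
        Finset.univ.biUnion fun i : ZMod q =>
          Finset.univ.filter fun s : ZMod (p * q) => p * q - p < (u i + s).val := by
      intro x _
      obtain ⟨i, hi⟩ := hcon x
      simp only [Finset.mem_biUnion, Finset.mem_filter, Finset.mem_univ, true_and]
      exact ⟨i, hi⟩
    have := Finset.card_le_card hsub
    rw [Finset.card_univ] at this
    omega
  -- the ruler
  set w : ZMod q → ℤ := fun i => (((u i + t).val : ℕ) : ℤ) with hw
  have huinj : Function.Injective u := by
    intro i j h
    have h2 := congrArg e h
    rw [heu, heu] at h2
    exact congrArg Prod.snd h2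
  have hwinj : Function.Injective w := by
    intro i j h
    have h2 : (u i + t).val = (u j + t).val := by
      simp only [hw] at h
      exact_mod_cast h
    have h3 : u i + t = u j + t := ZMod.val_injective _ h2
    exact huinj (add_right_cancel h3)
  set X : Finset ℤ := Finset.image w Finset.univ with hX
  have hcastN : ∀ i : ZMod q, ((w i : ℤ) : ZMod (p * q)) = u i + t := by
    intro i
    show ((((u i + t).val : ℕ) : ℤ) : ZMod (p * q)) = u i + t
    rw [Int.cast_natCast]
    exact ZMod.natCast_rightInverse (u i + t)
  -- card
  have hcard : X.card = q := by
    rw [hX, Finset.card_image_of_injective _ hwinj, Finset.card_univ, ZMod.card]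
  -- Golomb
  have hgolomb : IsGolombRuler X := by
    intro x1 hx1 x2 hx2 x3 hx3 x4 hx4 hdiff
    obtain ⟨a, -, rfl⟩ := Finset.mem_image.mp hx1
    obtain ⟨b, -, rfl⟩ := Finset.mem_image.mp hx2
    obtain ⟨c, -, rfl⟩ := Finset.mem_image.mp hx3
    obtain ⟨d, -, rfl⟩ := Finset.mem_image.mp hx4
    have hz : u a - u b = u c - u d := by
      have h0 := congrArg (fun z : ℤ => (z : ZMod (p * q))) hdiff
      simp only [Int.cast_sub, hcastN] at h0
      linear_combination h0
    have hee := congrArg e hz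
    rw [map_sub, map_sub, heu, heu, heu, heu, Prod.mk_sub_mk, Prod.mk_sub_mk,
      Prod.mk.injEq] at hee
    obtain ⟨h1, h2⟩ := hee
    have hsum : a + d = b + c := by linear_combination h2
    have hm : (Gu a : ZMod p) * (Gu d : ZMod p) = (Gu b : ZMod p) * (Gu c : ZMod p) := by
      exact_mod_cast congrArg (Units.val) (Gumul a b c d hsum)
    have hs : (Gu a : ZMod p) + (Gu d : ZMod p) = (Gu b : ZMod p) + (Gu c : ZMod p) := by
      linear_combination h1
    have hquad : ((Gu b : ZMod p) - (Gu a : ZMod p)) * ((Gu b : ZMod p) - (Gu d : ZMod p)) = 0 := by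
      linear_combination (-(Gu b : ZMod p)) * hs + hm
    rcases mul_eq_zero.mp hquad with h | h
    · have hba : b = a := Guinj (Units.ext (sub_eq_zero.mp h))
      have hcd : c = d := by
        have : c - d = 0 := by rw [← h2, hba, sub_self]
        exact sub_eq_zero.mp this
      exact Or.inl ⟨by rw [hba], by rw [hcd]⟩
    · have hbd : b = d := Guinj (Units.ext (sub_eq_zero.mp h))
      have hac : a = c := by
        have : a - b = c - b := by rw [h2, hbd]
        exact sub_left_injective this
      exact Or.inr ⟨by rw [hac], by rw [hbd]⟩
  -- bounds
  have hub : ∀ i : ZMod q, w i ≤ ((p * q - p : ℕ) : ℤ) := by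
    intro i
    show (((u i + t).val : ℕ) : ℤ) ≤ _
    exact_mod_cast ht i
  have hlb : ∀ i : ZMod q, (0 : ℤ) ≤ w i := fun i => Int.natCast_nonneg _
  have hne : X.Nonempty := ⟨w 0, Finset.mem_image_of_mem w (Finset.mem_univ 0)⟩
  obtain ⟨iM, -, hiM⟩ := Finset.mem_image.mp (X.max'_mem hne)
  obtain ⟨im, -, him⟩ := Finset.mem_image.mp (X.min'_mem hne)
  have h1 : X.max' hne ≤ ((p * q - p : ℕ) : ℤ) := by rw [← hiM]; exact hub iM
  have h2 : (0 : ℤ) ≤ X.min' hne := by rw [← him]; exact hlb im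
  have hmM : X.min' hne ≤ X.max' hne := X.min'_le _ (X.max'_mem hne)
  have hle : p * q - p ≤ p ^ 2 - 2 * p := by
    have h3 := hsq
    generalize hA : p * q = A at h3 ⊢
    generalize hB : p ^ 2 = B at h3 ⊢
    omega
  refine ⟨(X.max' hne - X.min' hne).toNat, ?_, X, hcard, hgolomb, ?_, ?_⟩
  · generalize hA : p * q - p = A at h1 hle
    generalize hB : p ^ 2 - 2 * p = B at hle ⊢
    omega
  · refine ⟨X.min' hne, X.min'_mem hne, X.max' hne, X.max'_mem hne,
      fun x hx => ⟨X.min'_le x hx, X.le_max' x hx⟩, ?_⟩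
    omega
  · intro r
    refine ⟨w (r - (e t).2), Finset.mem_image_of_mem w (Finset.mem_univ _), ?_⟩
    have h1 : ((w (r - (e t).2) : ℤ) : ZMod q) = (r - (e t).2) + (e t).2 := by
      rw [hw]
      simp only [Int.cast_natCast]
      rw [← hesnd, map_add, heu, Prod.snd_add]
    rw [h1]
    ring
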